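/- Every geometric semilattice is pure: all maximal chains have the same length. -/

import Mathlib

variable {α : Type*} [SemilatticeInf α] [OrderBot α] [Fintype α]

/-- The closed interval `[x,y]` is a geometric lattice: it is a lattice (joins
of elements of the interval exist in the interval), it is atomistic (every
element is the join of the atoms of the interval below it), and it is
semimodular. -/
def IsGeomIcc (x y : α) : Prop :=
  (∀ u v : α, x ≤ u → u ≤ y → x ≤ v → v ≤ y →
    ∃ j : α, x ≤ j ∧ j ≤ y ∧ u ≤ j ∧ v ≤ j ∧
      ∀ w : α, u ≤ w → v ≤ w → w ≤ y → j ≤ w) ∧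
  (∀ z w : α, x ≤ z → z ≤ y → x ≤ w → w ≤ y →
    (∀ a : α, x ⋖ a → a ≤ y → a ≤ z → a ≤ w) → z ≤ w) ∧
  (∀ w u v : α, x ≤ w → u ≤ y → v ≤ y → w ⋖ u → w ⋖ v → u ≠ v →
    ∃ t : α, t ≤ y ∧ u ⋖ t ∧ v ⋖ t)

/-- The principal upper order ideal `P` is a geometric semilattice (with
respect to the rank function `r` of the ambient poset): it is closed under
meets, every closed interval in it is a geometric lattice, and for every
`x ≥ b` and every set `A` of atoms of `P` (elements covering `b`) whose
join (computed in `P`, i.e. the least upper bound of `A ∪ {b}`) exists,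
if `r(x) < r(⋁A)` then some `a ∈ A` satisfies `a ≰ x` and `a ∨ x` exists. -/
def IsGeomSemilatticeOn (r : α → ℕ) (b : α) : Prop :=
  (∀ u v : α, b ≤ u → b ≤ v → b ≤ u ⊓ v) ∧
  (∀ x y : α, b ≤ x → x ≤ y → IsGeomIcc x y) ∧
  (∀ x : α, b ≤ x → ∀ A : Finset α, (∀ a ∈ A, b ⋖ a) →
    ∀ s : α, IsLUB (insert b (A : Set α)) s → r x < r s →
      ∃ a ∈ A, ¬ a ≤ x ∧ ∃ j : α, IsLUB {a, x} j)

/-- `r` is a rank function for the poset. -/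
def IsRankFunction (r : α → ℕ) : Prop :=
  r ⊥ = 0 ∧ ∀ x y : α, x ⋖ y → r y = r x + 1


private lemma chain_card_aux (r : α → ℕ) (hr : IsRankFunction r) :
    ∀ n (c : Set α) (m : α), c.ncard = n → IsChain (· ≤ ·) c →
      m ∈ c → (∀ x ∈ c, x ≤ m) → ⊥ ∈ c →
      (∀ a ∈ c, ∀ b ∈ c, a < b → (∃ e ∈ c, a < e ∧ e < b) ∨ a ⋖ b) →
      c.ncard = r m + 1 := by
  intro n
  induction n using Nat.strong_induction_on with
  | _ n ih =>
    intro c m hn hchain hm hub hbot hsat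
    by_cases hmb : m = ⊥
    · have hc : c = {⊥} :=
        Set.eq_singleton_iff_unique_mem.mpr
          ⟨hmb ▸ hm, fun x hx => le_bot_iff.mp (hmb ▸ hub x hx)⟩
      subst hmb; rw [hc, Set.ncard_singleton, hr.1]
    · set c' : Set α := c \ {m} with hc'
      have hfin : c'.Finite := Set.toFinite _
      have hbot' : ⊥ ∈ c' := ⟨hbot, by simp [Ne.symm hmb]⟩
      obtain ⟨m', hm'c, hmax'⟩ : ∃ a ∈ c', ∀ a' ∈ c', id a ≤ id a' → id a = id a' :=
        let ⟨a, ha, hm⟩ := hfin.exists_maximalFor id c' ⟨⊥, hbot'⟩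
        ⟨a, ha, fun b hb hab => le_antisymm hab (hm hb hab)⟩
      have hub' : ∀ x ∈ c', x ≤ m' := by
        intro x hx
        rcases eq_or_ne x m' with rfl | hne
        · exact le_rfl
        · rcases hchain hx.1 hm'c.1 hne with h1 | h1
          · exact h1
          · exact (hmax' x hx h1).ge
      have hm'm : m' < m := lt_of_le_of_ne (hub m' hm'c.1) (by simpa using hm'c.2)
      have hcov : m' ⋖ m := by
        rcases hsat m' hm'c.1 m hm hm'm with ⟨e, he, h1, h2⟩ | hc
        · exact absurd (hub' e ⟨he, by simp [h2.ne]⟩) h1.not_ge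
        · exact hc
      have hcard : c'.ncard + 1 = c.ncard := Set.ncard_diff_singleton_add_one hm (Set.toFinite c)
      have hchain' : IsChain (· ≤ ·) c' := hchain.mono Set.diff_subset
      have hsat' : ∀ a ∈ c', ∀ b ∈ c', a < b → (∃ e ∈ c', a < e ∧ e < b) ∨ a ⋖ b := by
        intro a ha b hb hab
        rcases hsat a ha.1 b hb.1 hab with ⟨e, he, h1, h2⟩ | hcv
        · refine Or.inl ⟨e, ⟨he, ?_⟩, h1, h2⟩
          simp [((h2.trans_le (hub' b hb)).trans hm'm).ne]
        · exact Or.inr hcv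
      have hih := ih c'.ncard (by omega) c' m' rfl hchain' hm'c hub' hbot' hsat'
      rw [hr.2 m' m hcov]
      omega

private lemma maxchain_card (r : α → ℕ) (hr : IsRankFunction r) (c : Set α)
    (hc : IsMaxChain (· ≤ ·) c) :
    ∃ m : α, (∀ z, m ≤ z → z = m) ∧ c.ncard = r m + 1 := by
  obtain ⟨hch, hmax⟩ := hc
  have hbot : ⊥ ∈ c := by
    have : c = insert ⊥ c :=
      hmax (hch.insert fun y hy _ => Or.inl bot_le) (Set.subset_insert _ _)
    rw [this]; exact Set.mem_insert _ _
  obtain ⟨m, hm, hmax'⟩ : ∃ a ∈ c, ∀ a' ∈ c, id a ≤ id a' → id a = id a' :=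
    let ⟨a, ha, hm⟩ := (Set.toFinite c).exists_maximalFor id c ⟨⊥, hbot⟩
    ⟨a, ha, fun b hb hab => le_antisymm hab (hm hb hab)⟩
  have hub : ∀ x ∈ c, x ≤ m := by
    intro x hx
    rcases eq_or_ne x m with rfl | hne
    · exact le_rfl
    · rcases hch hx hm hne with h1 | h1
      · exact h1
      · exact (hmax' x hx h1).ge
  have hmmax : ∀ z, m ≤ z → z = m := by
    intro z hz
    have hzc : z ∈ c := by
      have : c = insert z c :=
        hmax (hch.insert fun y hy _ => Or.inr ((hub y hy).trans hz))
          (Set.subset_insert _ _)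
      rw [this]; exact Set.mem_insert _ _
    exact le_antisymm (hub z hzc) hz
  refine ⟨m, hmmax, ?_⟩
  apply chain_card_aux r hr c.ncard c m rfl hch hm hub hbot
  intro a ha b hb hab
  by_contra hcon
  push_neg at hcon
  obtain ⟨h1, h2⟩ := hcon
  obtain ⟨z, hz1, hz2⟩ := (not_covBy_iff hab).mp h2
  have hzc : z ∈ c := by
    have : c = insert z c := by
      refine hmax (hch.insert ?_) (Set.subset_insert _ _)
      intro y hy _
      rcases eq_or_ne y a with rfl | hya
      · exact Or.inr hz1.le
      rcases eq_or_ne y b with rfl | hyb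
      · exact Or.inl hz2.le
      rcases hch hy ha hya with h3 | h3
      · exact Or.inr (h3.trans hz1.le)
      · rcases hch hy hb hyb with h4 | h4
        · exact (h1 y hy (lt_of_le_of_ne h3 (Ne.symm hya)) (lt_of_le_of_ne h4 hyb)).elim
        · exact Or.inl (hz2.le.trans h4)
    rw [this]; exact Set.mem_insert _ _
  exact h1 z hzc hz1 hz2

private lemma not_rank_lt (r : α → ℕ) (h : IsGeomSemilatticeOn r (⊥ : α)) {m₁ m₂ : α}
    (h1 : ∀ z, m₁ ≤ z → z = m₁) : ¬ r m₁ < r m₂ := by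
  intro hlt
  classical
  set A : Finset α := Finset.univ.filter (fun a => ⊥ ⋖ a ∧ a ≤ m₂) with hA
  have hAatom : ∀ a ∈ A, (⊥ : α) ⋖ a := fun a ha => ((Finset.mem_filter.mp ha).2).1
  have hlub : IsLUB (insert ⊥ (A : Set α)) m₂ := by
    constructor
    · intro x hx
      rcases hx with rfl | hx
      · exact bot_le
      · exact ((Finset.mem_filter.mp hx).2).2
    · intro w hw
      have hat := (h.2.1 ⊥ m₂ le_rfl bot_le).2.1 m₂ (m₂ ⊓ w) bot_le le_rfl bot_le inf_le_left ?_
      · exact hat.trans inf_le_right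
      · intro a hcov ham2 _
        refine le_inf ham2 (hw ?_)
        refine Set.mem_insert_iff.mpr (Or.inr ?_)
        simp only [hA, Finset.coe_filter, Finset.mem_univ, Set.mem_setOf_eq]
        exact ⟨trivial, hcov, ham2⟩
  obtain ⟨a, haA, hax, j, hj⟩ := h.2.2 m₁ bot_le A hAatom m₂ hlub hlt
  have hm1j : m₁ ≤ j := hj.1 (by simp)
  have hje : j = m₁ := h1 j hm1j
  exact hax (hje ▸ hj.1 (by simp))

/-- Every geometric semilattice is pure: all maximal chains have the same
length. -/
theorem stmt_15 (r : α → ℕ) (hr : IsRankFunction r)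
    (h : IsGeomSemilatticeOn r (⊥ : α)) :
    ∀ c₁ c₂ : Set α, IsMaxChain (· ≤ ·) c₁ → IsMaxChain (· ≤ ·) c₂ →
      c₁.ncard = c₂.ncard := by
  intro c₁ c₂ hc₁ hc₂
  obtain ⟨m₁, hm₁, he₁⟩ := maxchain_card r hr c₁ hc₁
  obtain ⟨m₂, hm₂, he₂⟩ := maxchain_card r hr c₂ hc₂
  have : r m₁ = r m₂ :=
    le_antisymm (not_lt.mp (not_rank_lt r h hm₂)) (not_lt.mp (not_rank_lt r h hm₁))
  rw [he₁, he₂, this]
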